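/- arXiv:1405.5097 — 5 statements merged into one kernel-verified Lean document; each statement's English description precedes it below -/
import Mathlib

section
/- The VS(A) estimator θ̂_l = (1/(nB')) Σ_{i=1}^{B'} (1/p_{y_i}) Σ_{u∈U_{y_i}} 1[l ∈ L(u)]/d_u^{(b)} is an unbiased estimator of θ_l, i.e., E[θ̂_l] = θ_l. -/
open MeasureTheory

/- STATEMENT 1: The VS(A) estimator
θ̂_l = (1/(nB')) Σ_{i=1}^{B'} (1/p_{y_i}) Σ_{u∈U_{y_i}} 1[l ∈ L(u)]/d_u^{(b)}
is an unbiased estimator of θ_l, i.e., E[θ̂_l] = θ_l.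
Context: G_b bipartite with finite parts U, V; U_v the neighbor set of v; d_u^{(b)} > 0
the degree of u in G_b; n = |U| ≥ 1; θ_l = (1/n) Σ_u 1[l ∈ L(u)]; p a probability
distribution on V with p_v > 0; y_1,…,y_{B'} i.i.d. V-valued with P(y_i = v) = p_v. -/
theorem vsA_estimator_unbiased {U V Λ Ω : Type*} [Fintype U] [Fintype V]
    [MeasurableSpace Ω] [MeasurableSpace V] [MeasurableSingletonClass V]
    (μ : Measure Ω) [IsProbabilityMeasure μ]
    (Adj : U → V → Prop)
    [∀ v, DecidablePred (fun u : U => Adj u v)] [∀ u, DecidablePred (fun v : V => Adj u v)]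
    (degb : U → ℕ)
    (hdegb : ∀ u : U, degb u = (Finset.univ.filter (fun v : V => Adj u v)).card)
    (hdeg : ∀ u : U, 0 < degb u)
    (n : ℕ) (hn : n = Fintype.card U) (hn1 : 1 ≤ n)
    (L : U → Set Λ) (l : Λ) [DecidablePred fun u : U => l ∈ L u]
    (θ : ℝ) (hθ : θ = (1 / (n : ℝ)) * ∑ u : U, if l ∈ L u then (1 : ℝ) else 0)
    (p : V → ℝ) (hp : ∀ v, 0 < p v) (hpsum : ∑ v : V, p v = 1)
    (B' : ℕ) (hB' : 0 < B')
    (y : Fin B' → Ω → V) (hmeas : ∀ i, Measurable (y i))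
    (hindep : ProbabilityTheory.iIndepFun y μ)
    (hmarg : ∀ (i : Fin B') (v : V), μ {ω | y i ω = v} = ENNReal.ofReal (p v)) :
    ∫ ω, (1 / ((n : ℝ) * (B' : ℝ))) * ∑ i : Fin B', (1 / p (y i ω)) *
        ∑ u ∈ Finset.univ.filter (fun u : U => Adj u (y i ω)),
          (if l ∈ L u then (1 : ℝ) else 0) / (degb u : ℝ) ∂μ
      = θ := by
  classical
  set g : V → ℝ := fun v => (1 / p v) *
      ∑ u ∈ Finset.univ.filter (fun u : U => Adj u v),
        (if l ∈ L u then (1 : ℝ) else 0) / (degb u : ℝ) with hg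
  have hgmeas : Measurable g := measurable_of_countable g
  -- integrability of g ∘ y i
  have hInt : ∀ i : Fin B', Integrable (fun ω => g (y i ω)) μ := by
    intro i
    haveI : IsProbabilityMeasure (μ.map (y i)) :=
      Measure.isProbabilityMeasure_map (hmeas i).aemeasurable
    have : Integrable g (μ.map (y i)) := .of_finite
    exact (integrable_map_measure hgmeas.aestronglyMeasurable
      (hmeas i).aemeasurable).mp this
  -- value of ∫ g (y i)
  have hint : ∀ i : Fin B', ∫ ω, g (y i ω) ∂μ = ∑ v : V, p v * g v := by
    intro i
    haveI : IsProbabilityMeasure (μ.map (y i)) :=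
      Measure.isProbabilityMeasure_map (hmeas i).aemeasurable
    rw [← integral_map (hmeas i).aemeasurable hgmeas.aestronglyMeasurable,
      integral_fintype _]
    refine Finset.sum_congr rfl fun v _ => ?_
    rw [measureReal_def, Measure.map_apply (hmeas i) (measurableSet_singleton v)]
    have hpre : y i ⁻¹' {v} = {ω | y i ω = v} := rfl
    rw [hpre, hmarg, ENNReal.toReal_ofReal (hp v).le, smul_eq_mul]
    exact .of_finite
  -- value of ∑ v, p v * g v
  have hS : ∑ v : V, p v * g v = ∑ u : U, (if l ∈ L u then (1 : ℝ) else 0) := by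
    have h1 : ∀ v : V, p v * g v =
        ∑ u : U, (if Adj u v then (if l ∈ L u then (1 : ℝ) else 0) / (degb u : ℝ) else 0) := by
      intro v
      rw [hg]
      rw [← Finset.sum_filter]
      field_simp
      exact mul_div_cancel_left₀ _ (hp v).ne'
    simp_rw [h1]
    rw [Finset.sum_comm]
    refine Finset.sum_congr rfl fun u _ => ?_
    rw [← Finset.sum_filter, Finset.sum_const, ← hdegb u, nsmul_eq_mul]
    have hd : (degb u : ℝ) ≠ 0 := Nat.cast_ne_zero.mpr (hdeg u).ne'
    field_simp
  -- main computation
  have hiexp : ∀ ω, (∑ i : Fin B', (1 / p (y i ω)) *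
        ∑ u ∈ Finset.univ.filter (fun u : U => Adj u (y i ω)),
          (if l ∈ L u then (1 : ℝ) else 0) / (degb u : ℝ)) = ∑ i : Fin B', g (y i ω) := by
    intro ω; rfl
  simp_rw [hiexp]
  rw [integral_const_mul, integral_finset_sum _ (fun i _ => hInt i)]
  simp_rw [hint, hS]
  rw [Finset.sum_const, Finset.card_univ, Fintype.card_fin, nsmul_eq_mul, hθ]
  have hnne : (n : ℝ) ≠ 0 := Nat.cast_ne_zero.mpr (by omega)
  have hBne : (B' : ℝ) ≠ 0 := Nat.cast_ne_zero.mpr hB'.ne'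
  field_simp
end

section
/- The self-normalized VS(A) estimator θ̌_l = [Σ_{i=1}^{B'} (1/p_{y_i}) Σ_{u∈U_{y_i}} 1[l ∈ L(u)]/d_u^{(b)}] / [Σ_{i=1}^{B'} (1/p_{y_i}) Σ_{u∈U_{y_i}} 1/d_u^{(b)}] is an asymptotically unbiased estimator of θ_l: almost surely, θ̌_l converges to θ_l as B' → ∞. -/
open MeasureTheory

/- STATEMENT 3: The self-normalized VS(A) estimator
θ̌_l = [Σ_{i=1}^{B'} (1/p_{y_i}) Σ_{u∈U_{y_i}} 1[l ∈ L(u)]/d_u^{(b)}] /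
      [Σ_{i=1}^{B'} (1/p_{y_i}) Σ_{u∈U_{y_i}} 1/d_u^{(b)}]
is an asymptotically unbiased estimator of θ_l: almost surely, θ̌_l → θ_l as B' → ∞.
Context: G_b bipartite with finite parts U, V; U_v the neighbor set of v; d_u^{(b)} > 0
the degree of u in G_b; n = |U| ≥ 1; θ_l = (1/n) Σ_u 1[l ∈ L(u)]; p a probability
distribution on V with p_v > 0; y_1, y_2, … an infinite i.i.d. sequence of V-valued
random variables with P(y_i = v) = p_v. -/
theorem vsA_self_normalized_estimator_consistent {U V Λ Ω : Type*} [Fintype U] [Fintype V]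
    [MeasurableSpace Ω] [MeasurableSpace V] [MeasurableSingletonClass V]
    (μ : Measure Ω) [IsProbabilityMeasure μ]
    (Adj : U → V → Prop)
    [∀ v, DecidablePred (fun u : U => Adj u v)] [∀ u, DecidablePred (fun v : V => Adj u v)]
    (degb : U → ℕ)
    (hdegb : ∀ u : U, degb u = (Finset.univ.filter (fun v : V => Adj u v)).card)
    (hdeg : ∀ u : U, 0 < degb u)
    (n : ℕ) (hn : n = Fintype.card U) (hn1 : 1 ≤ n)
    (L : U → Set Λ) (l : Λ) [DecidablePred fun u : U => l ∈ L u]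
    (θ : ℝ) (hθ : θ = (1 / (n : ℝ)) * ∑ u : U, if l ∈ L u then (1 : ℝ) else 0)
    (p : V → ℝ) (hp : ∀ v, 0 < p v) (hpsum : ∑ v : V, p v = 1)
    (y : ℕ → Ω → V) (hmeas : ∀ i, Measurable (y i))
    (hindep : ProbabilityTheory.iIndepFun y μ)
    (hmarg : ∀ (i : ℕ) (v : V), μ {ω | y i ω = v} = ENNReal.ofReal (p v)) :
    ∀ᵐ ω ∂μ, Filter.Tendsto (fun B' : ℕ =>
        (∑ i ∈ Finset.range B', (1 / p (y i ω)) *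
            ∑ u ∈ Finset.univ.filter (fun u : U => Adj u (y i ω)),
              (if l ∈ L u then (1 : ℝ) else 0) / (degb u : ℝ)) /
        (∑ i ∈ Finset.range B', (1 / p (y i ω)) *
            ∑ u ∈ Finset.univ.filter (fun u : U => Adj u (y i ω)),
              1 / (degb u : ℝ)))
      Filter.atTop (nhds θ) := by
  classical
  -- General strong law for functions of the samples
  have slln : ∀ F : V → ℝ, ∀ᵐ ω ∂μ, Filter.Tendsto
      (fun B : ℕ => (∑ i ∈ Finset.range B, F (y i ω)) / B) Filter.atTop
      (nhds (∑ v : V, p v * F v)) := by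
    intro F
    have mF : Measurable F := measurable_of_countable F
    have hXmeas : ∀ i, Measurable (fun ω => F (y i ω)) := fun i => mF.comp (hmeas i)
    have hmapeq : ∀ i, Measure.map (y i) μ = Measure.map (y 0) μ := by
      intro i
      apply MeasureTheory.Measure.ext_of_singleton
      intro v
      rw [Measure.map_apply (hmeas i) (MeasurableSet.singleton v),
        Measure.map_apply (hmeas 0) (MeasurableSet.singleton v)]
      have : ∀ j : ℕ, y j ⁻¹' {v} = {ω | y j ω = v} := fun j => rfl
      rw [this i, this 0, hmarg i v, hmarg 0 v]
    have hyident : ∀ i, ProbabilityTheory.IdentDistrib (y i) (y 0) μ μ := fun i =>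
      ⟨(hmeas i).aemeasurable, (hmeas 0).aemeasurable, hmapeq i⟩
    have hident : ∀ i, ProbabilityTheory.IdentDistrib (fun ω => F (y i ω)) (fun ω => F (y 0 ω)) μ μ :=
      fun i => (hyident i).comp mF
    have hpind : Pairwise (Function.onFun (ProbabilityTheory.IndepFun · · μ) (fun i ω => F (y i ω))) := by
      intro i j hij
      exact (hindep.indepFun hij).comp mF mF
    have hint : MeasureTheory.Integrable (fun ω => F (y 0 ω)) μ := by
      have hb : ∀ᵐ ω ∂μ, ‖F (y 0 ω)‖ ≤ ∑ v : V, ‖F v‖ := by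
        filter_upwards with ω
        exact Finset.single_le_sum (fun v _ => norm_nonneg (F v)) (Finset.mem_univ (y 0 ω))
      exact MeasureTheory.Integrable.mono' (MeasureTheory.integrable_const _)
        (hXmeas 0).aestronglyMeasurable hb
    have hexp : (∫ ω, F (y 0 ω) ∂μ) = ∑ v : V, p v * F v := by
      have hmap : IsProbabilityMeasure (Measure.map (y 0) μ) :=
        MeasureTheory.Measure.isProbabilityMeasure_map (hmeas 0).aemeasurable
      have h1 : (∫ ω, F (y 0 ω) ∂μ) = ∫ v, F v ∂(Measure.map (y 0) μ) := by
        rw [MeasureTheory.integral_map (hmeas 0).aemeasurable mF.aestronglyMeasurable]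
      rw [h1, MeasureTheory.integral_fintype (f := F) MeasureTheory.Integrable.of_finite]
      apply Finset.sum_congr rfl
      intro v _
      rw [measureReal_def, Measure.map_apply (hmeas 0) (MeasurableSet.singleton v)]
      have h2 : y 0 ⁻¹' {v} = {ω | y 0 ω = v} := rfl
      rw [h2, hmarg 0 v, ENNReal.toReal_ofReal (hp v).le, smul_eq_mul]
    have H := ProbabilityTheory.strong_law_ae_real (fun i ω => F (y i ω)) hint hpind hident
    exact H.mono fun ω h => hexp ▸ h
  -- Key combinatorial identity
  have key : ∀ h : U → ℝ, (∑ v : V, p v * ((1 / p v) *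
      ∑ u ∈ Finset.univ.filter (fun u : U => Adj u v), h u / (degb u : ℝ))) = ∑ u : U, h u := by
    intro h
    have step1 : ∀ v : V, p v * ((1 / p v) *
        ∑ u ∈ Finset.univ.filter (fun u : U => Adj u v), h u / (degb u : ℝ)) =
        ∑ u ∈ Finset.univ.filter (fun u : U => Adj u v), h u / (degb u : ℝ) := by
      intro v
      rw [← mul_assoc, mul_one_div, div_self (hp v).ne', one_mul]
    simp only [step1]
    have step2 : (∑ v : V, ∑ u ∈ Finset.univ.filter (fun u : U => Adj u v), h u / (degb u : ℝ)) =
        ∑ u : U, ∑ v ∈ Finset.univ.filter (fun v : V => Adj u v), h u / (degb u : ℝ) := by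
      simp only [Finset.sum_filter]
      exact Finset.sum_comm
    rw [step2]
    apply Finset.sum_congr rfl
    intro u _
    rw [Finset.sum_const, ← hdegb u, nsmul_eq_mul]
    have hd : (degb u : ℝ) ≠ 0 := by
      exact_mod_cast (hdeg u).ne'
    field_simp
  -- Apply SLLN to numerator and denominator
  set F : V → ℝ := fun v => (1 / p v) *
    ∑ u ∈ Finset.univ.filter (fun u : U => Adj u v), (if l ∈ L u then (1 : ℝ) else 0) / (degb u : ℝ) with hFdef
  set G : V → ℝ := fun v => (1 / p v) *
    ∑ u ∈ Finset.univ.filter (fun u : U => Adj u v), 1 / (degb u : ℝ) with hGdef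
  have hFsum : (∑ v : V, p v * F v) = ∑ u : U, if l ∈ L u then (1 : ℝ) else 0 := key _
  have hGsum : (∑ v : V, p v * G v) = (n : ℝ) := by
    rw [key (fun _ => (1 : ℝ))]
    simp [hn, Finset.card_univ]
  filter_upwards [slln F, slln G] with ω hFt hGt
  rw [hFsum] at hFt
  rw [hGsum] at hGt
  have hn0 : (n : ℝ) ≠ 0 := by positivity
  have hdiv := hFt.div hGt hn0
  have hlim : (∑ u : U, if l ∈ L u then (1 : ℝ) else 0) / (n : ℝ) = θ := by
    rw [hθ]; ring
  rw [hlim] at hdiv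
  apply hdiv.congr'
  filter_upwards [Filter.eventually_ge_atTop 1] with B hB
  have hB0 : (B : ℝ) ≠ 0 := by positivity
  simp only [Pi.div_apply]
  rw [div_div_div_cancel_right₀ hB0]
end

section
/- The distribution π_u = (d_u + α q_u)/(2|E| + α) is the stationary distribution of the RW_T VS_A random walk: Σ_{u∈U} π_u = 1 and Σ_{u∈U} π_u P(u,u') = π_{u'} for every u' ∈ U. -/
/- STATEMENT 6: π_u = (d_u + α q_u)/(2|E| + α) is the stationary distribution of the RW_T VS_A walk with kernel
P(u,u') = (α q_u q_{u'} + A_{uu'})/(d_u + α q_u):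
Σ_{u∈U} π_u = 1 and Σ_{u∈U} π_u P(u,u') = π_{u'} for every u' ∈ U.
Context: G finite simple undirected graph on U with symmetric 0/1 adjacency matrix A
with zero diagonal; d_u = Σ_{u'} A_{uu'}, so Σ_u d_u = 2|E|; α ≥ 0; q a probability
distribution on U; d_u + α q_u > 0 for every u. -/
theorem rwtvsa_stationary_distribution {U : Type*} [Fintype U]
    (A : U → U → ℝ)
    (hA01 : ∀ u u' : U, A u u' = 0 ∨ A u u' = 1)
    (hAsymm : ∀ u u' : U, A u u' = A u' u)
    (hAdiag : ∀ u : U, A u u = 0)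
    (d : U → ℝ) (hd : ∀ u : U, d u = ∑ u' : U, A u u')
    (twoE : ℝ) (htwoE : twoE = ∑ u : U, d u)
    (α : ℝ) (hα : 0 ≤ α) (hden : 0 < twoE + α)
    (q : U → ℝ) (hq : ∀ u, 0 ≤ q u) (hqsum : ∑ u : U, q u = 1)
    (hpos : ∀ u : U, 0 < d u + α * q u)
    (P : U → U → ℝ)
    (hP : ∀ u u' : U, P u u' = (α * q u * q u' + A u u') / (d u + α * q u))
    (π : U → ℝ) (hπ : ∀ u : U, π u = (d u + α * q u) / (twoE + α)) :
    (∑ u : U, π u = 1) ∧ ∀ u' : U, ∑ u : U, π u * P u u' = π u' := by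
  have hne : twoE + α ≠ 0 := ne_of_gt hden
  constructor
  · simp only [hπ]
    rw [← Finset.sum_div, div_eq_one_iff_eq hne, htwoE, Finset.sum_add_distrib,
      ← Finset.mul_sum, hqsum, mul_one]
  · intro u'
    have key : ∀ u : U, π u * P u u' = (α * q u * q u' + A u u') / (twoE + α) := by
      intro u
      rw [hπ, hP, div_mul_div_comm, mul_comm (twoE + α)]
      exact mul_div_mul_left _ _ (ne_of_gt (hpos u))
    simp only [key]
    rw [← Finset.sum_div, hπ]
    congr 1
    have : ∑ u : U, (α * q u * q u' + A u u') = α * q u' + d u' := by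
      rw [Finset.sum_add_distrib]
      congr 1
      · rw [← Finset.sum_mul, ← Finset.mul_sum, hqsum, mul_one]
      · rw [hd]
        exact Finset.sum_congr rfl fun u _ => hAsymm u u'
    rw [this]; ring
end

section
/- If the vectors (π_U, π_V, ω_U, w_V) satisfy the RW_T RW_A balance equations π_U = (d_U + ω_U)/(2|E| + α), π_V = (d_V + w_V)/(2|E'| + β), ω_U = α A D_V^{-1} π_V, and w_V = β A^T D_U^{-1} π_U, and if the matrix I − c c' A D_V^{-1} A^T D_U^{-1} is invertible where c = β/(2|E| + α) and c' = α/(2|E'| + β), then ω_U is uniquely determined and equals ω_U = c' (I − c c' A D_V^{-1} A^T D_U^{-1})^{-1} A D_V^{-1} (d_V + c A^T D_U^{-1} d_U). -/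
open Matrix

/- STATEMENT 10: If (π_U, π_V, ω_U, w_V) satisfy the RW_T RW_A balance equations
π_U = (d_U + ω_U)/(2|E| + α), π_V = (d_V + w_V)/(2|E'| + β), ω_U = α A D_V⁻¹ π_V,
w_V = β Aᵀ D_U⁻¹ π_U, and if I − c c' A D_V⁻¹ Aᵀ D_U⁻¹ is invertible where
c = β/(2|E| + α) and c' = α/(2|E'| + β), then ω_U is uniquely determined and equals
ω_U = c' (I − c c' A D_V⁻¹ Aᵀ D_U⁻¹)⁻¹ A D_V⁻¹ (d_V + c Aᵀ D_U⁻¹ d_U). -/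
theorem rwtrwa_omega_formula {n n' : ℕ}
    (A : Matrix (Fin n) (Fin n') ℝ)
    (hA01 : ∀ u v, A u v = 0 ∨ A u v = 1)
    (dUb : Fin n → ℝ) (hdUb : ∀ u, dUb u = ∑ v, A u v) (hdUbpos : ∀ u, 0 < dUb u)
    (dVb : Fin n' → ℝ) (hdVb : ∀ v, dVb v = ∑ u, A u v) (hdVbpos : ∀ v, 0 < dVb v)
    (DU : Matrix (Fin n) (Fin n) ℝ) (hDU : DU = Matrix.diagonal dUb)
    (DV : Matrix (Fin n') (Fin n') ℝ) (hDV : DV = Matrix.diagonal dVb)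
    (dU : Fin n → ℝ) (dV : Fin n' → ℝ)
    (twoE twoE' : ℝ) (htwoE : twoE = ∑ u, dU u) (htwoE' : twoE' = ∑ v, dV v)
    (α β : ℝ) (hα : 0 < α) (hβ : 0 < β)
    (hden : 0 < twoE + α) (hden' : 0 < twoE' + β)
    (πU ωU : Fin n → ℝ) (πV wV : Fin n' → ℝ)
    (hπU : πU = (twoE + α)⁻¹ • (dU + ωU))
    (hπV : πV = (twoE' + β)⁻¹ • (dV + wV))
    (hωU : ωU = α • ((A * DV⁻¹) *ᵥ πV))
    (hwV : wV = β • ((Aᵀ * DU⁻¹) *ᵥ πU))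
    (c c' : ℝ) (hc : c = β / (twoE + α)) (hc' : c' = α / (twoE' + β))
    (hinv : IsUnit (1 - (c * c') • (A * DV⁻¹ * Aᵀ * DU⁻¹))) :
    ωU = c' • (((1 - (c * c') • (A * DV⁻¹ * Aᵀ * DU⁻¹))⁻¹ * (A * DV⁻¹)) *ᵥ
      (dV + c • ((Aᵀ * DU⁻¹) *ᵥ dU))) := by
  set M := 1 - (c * c') • (A * DV⁻¹ * Aᵀ * DU⁻¹) with hM
  set b := dV + c • ((Aᵀ * DU⁻¹) *ᵥ dU) with hb
  have hωU2 : ωU = c' • ((A * DV⁻¹) *ᵥ (dV + wV)) := by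
    rw [hωU, hπV, Matrix.mulVec_smul, smul_smul, hc', div_eq_mul_inv]
  have hwV2 : wV = c • ((Aᵀ * DU⁻¹) *ᵥ (dU + ωU)) := by
    rw [hwV, hπU, Matrix.mulVec_smul, smul_smul, hc, div_eq_mul_inv]
  have heq : ωU = c' • ((A * DV⁻¹) *ᵥ b) + (c * c') • ((A * DV⁻¹ * Aᵀ * DU⁻¹) *ᵥ ωU) := by
    nth_rewrite 1 [hωU2]
    rw [hwV2, hb]
    simp only [Matrix.mulVec_add, Matrix.mulVec_smul, smul_add, smul_smul,
      ← Matrix.mulVec_mulVec, Matrix.mul_assoc]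
    module
  have key : M *ᵥ ωU = c' • ((A * DV⁻¹) *ᵥ b) := by
    rw [hM, Matrix.sub_mulVec, Matrix.one_mulVec, Matrix.smul_mulVec]
    nth_rewrite 1 [heq]
    abel
  have hdet : IsUnit M.det := (Matrix.isUnit_iff_isUnit_det M).mp hinv
  calc ωU = (M⁻¹ * M) *ᵥ ωU := by rw [Matrix.nonsing_inv_mul M hdet, Matrix.one_mulVec]
    _ = M⁻¹ *ᵥ (M *ᵥ ωU) := by rw [Matrix.mulVec_mulVec]
    _ = c' • ((M⁻¹ * (A * DV⁻¹)) *ᵥ b) := by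
        rw [key, Matrix.mulVec_smul, Matrix.mulVec_mulVec]
end

section
/- If the vectors (π_U, π_V, ω_U, w_V) satisfy the RW_T RW_A balance equations π_U = (d_U + ω_U)/(2|E| + α), π_V = (d_V + w_V)/(2|E'| + β), ω_U = α A D_V^{-1} π_V, and w_V = β A^T D_U^{-1} π_U, and if the matrix I − c c' A^T D_U^{-1} A D_V^{-1} is invertible where c = β/(2|E| + α) and c' = α/(2|E'| + β), then w_V is uniquely determined and equals w_V = c (I − c c' A^T D_U^{-1} A D_V^{-1})^{-1} A^T D_U^{-1} (d_U + c' A D_V^{-1} d_V). -/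
open Matrix

/- STATEMENT 11: If (π_U, π_V, ω_U, w_V) satisfy the RW_T RW_A balance equations
π_U = (d_U + ω_U)/(2|E| + α), π_V = (d_V + w_V)/(2|E'| + β), ω_U = α A D_V⁻¹ π_V,
w_V = β Aᵀ D_U⁻¹ π_U, and if I − c c' Aᵀ D_U⁻¹ A D_V⁻¹ is invertible where
c = β/(2|E| + α) and c' = α/(2|E'| + β), then w_V is uniquely determined and equals
w_V = c (I − c c' Aᵀ D_U⁻¹ A D_V⁻¹)⁻¹ Aᵀ D_U⁻¹ (d_U + c' A D_V⁻¹ d_V). -/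
theorem rwtrwa_w_formula {n n' : ℕ}
    (A : Matrix (Fin n) (Fin n') ℝ)
    (hA01 : ∀ u v, A u v = 0 ∨ A u v = 1)
    (dUb : Fin n → ℝ) (hdUb : ∀ u, dUb u = ∑ v, A u v) (hdUbpos : ∀ u, 0 < dUb u)
    (dVb : Fin n' → ℝ) (hdVb : ∀ v, dVb v = ∑ u, A u v) (hdVbpos : ∀ v, 0 < dVb v)
    (DU : Matrix (Fin n) (Fin n) ℝ) (hDU : DU = Matrix.diagonal dUb)
    (DV : Matrix (Fin n') (Fin n') ℝ) (hDV : DV = Matrix.diagonal dVb)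
    (dU : Fin n → ℝ) (dV : Fin n' → ℝ)
    (twoE twoE' : ℝ) (htwoE : twoE = ∑ u, dU u) (htwoE' : twoE' = ∑ v, dV v)
    (α β : ℝ) (hα : 0 < α) (hβ : 0 < β)
    (hden : 0 < twoE + α) (hden' : 0 < twoE' + β)
    (πU ωU : Fin n → ℝ) (πV wV : Fin n' → ℝ)
    (hπU : πU = (twoE + α)⁻¹ • (dU + ωU))
    (hπV : πV = (twoE' + β)⁻¹ • (dV + wV))
    (hωU : ωU = α • ((A * DV⁻¹) *ᵥ πV))
    (hwV : wV = β • ((Aᵀ * DU⁻¹) *ᵥ πU))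
    (c c' : ℝ) (hc : c = β / (twoE + α)) (hc' : c' = α / (twoE' + β))
    (hinv : IsUnit (1 - (c * c') • (Aᵀ * DU⁻¹ * A * DV⁻¹))) :
    wV = c • (((1 - (c * c') • (Aᵀ * DU⁻¹ * A * DV⁻¹))⁻¹ * (Aᵀ * DU⁻¹)) *ᵥ
      (dU + c' • ((A * DV⁻¹) *ᵥ dV))) := by
  set M : Matrix (Fin n') (Fin n') ℝ := Aᵀ * DU⁻¹ * A * DV⁻¹ with hM
  -- wV = c • AᵀDU⁻¹ (dU + ωU)
  have hw1 : wV = c • ((Aᵀ * DU⁻¹) *ᵥ (dU + ωU)) := by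
    rw [hwV, hπU, mulVec_smul, smul_smul, hc, div_eq_mul_inv]
  have hω1 : ωU = c' • ((A * DV⁻¹) *ᵥ (dV + wV)) := by
    rw [hωU, hπV, mulVec_smul, smul_smul, hc', div_eq_mul_inv]
  have key : (1 - (c * c') • M) *ᵥ wV
      = c • ((Aᵀ * DU⁻¹) *ᵥ (dU + c' • ((A * DV⁻¹) *ᵥ dV))) := by
    have hMw : M *ᵥ wV = (Aᵀ * DU⁻¹) *ᵥ ((A * DV⁻¹) *ᵥ wV) := by
      rw [hM, mulVec_mulVec, Matrix.mul_assoc]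
    rw [sub_mulVec, one_mulVec, smul_mulVec, hMw]
    nth_rewrite 1 [hw1, hω1]
    simp only [mulVec_add, mulVec_smul, smul_add, smul_smul]
    abel
  have hdet : IsUnit (1 - (c * c') • M).det := (isUnit_iff_isUnit_det _).mp hinv
  calc wV = ((1 - (c * c') • M)⁻¹ * (1 - (c * c') • M)) *ᵥ wV := by
            rw [Matrix.nonsing_inv_mul _ hdet, one_mulVec]
    _ = (1 - (c * c') • M)⁻¹ *ᵥ ((1 - (c * c') • M) *ᵥ wV) := by
            rw [← mulVec_mulVec]
    _ = c • (((1 - (c * c') • M)⁻¹ * (Aᵀ * DU⁻¹)) *ᵥ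
          (dU + c' • ((A * DV⁻¹) *ᵥ dV))) := by
            rw [key, mulVec_smul, mulVec_mulVec]
end
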